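/- Let w be an infinite binary recurrent word in which every factor has at most three abelian returns. Then each letter of w appears in blocks of at most three distinct lengths; that is, for each letter a, the set of integers k such that b a^k c is a factor of w for letters b ≠ a, c ≠ a has cardinality at most 3. -/
import Mathlib


/-- The factor of length `n` of the infinite word `w` starting at position `i`. -/
def wordAt {α : Type*} (w : ℕ → α) (i n : ℕ) : List α :=
  (List.range n).map (fun k => w (i + k))

/-- `u` is a factor of the infinite word `w`. -/
def IsFactorW {α : Type*} (w : ℕ → α) (u : List α) : Prop :=
  ∃ i, u = wordAt w i u.length

/-- `w` is recurrent: every factor occurs infinitely often. -/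
def RecurrentW {α : Type*} (w : ℕ → α) : Prop :=
  ∀ u, IsFactorW w u → ∀ N, ∃ i, N ≤ i ∧ u = wordAt w i u.length

/-- `w` is (purely) periodic. -/
def PeriodicW {α : Type*} (w : ℕ → α) : Prop :=
  ∃ T, 0 < T ∧ ∀ n, w (n + T) = w n

/-- `w` is ultimately periodic. -/
def UltPeriodicW {α : Type*} (w : ℕ → α) : Prop :=
  ∃ T, 0 < T ∧ ∃ n₀, ∀ n, n₀ ≤ n → w (n + T) = w n

/-- Two finite words are abelian equivalent: same number of occurrences of each letter. -/
def AbEquiv {α : Type*} [DecidableEq α] (u v : List α) : Prop :=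
  ∀ a : α, u.count a = v.count a

/-- Positions of occurrences of words abelian equivalent to `u` in `w`. -/
def abOcc {α : Type*} [DecidableEq α] (w : ℕ → α) (u : List α) : Set ℕ :=
  {i | AbEquiv (wordAt w i u.length) u}

/-- The semi-abelian returns to (the abelian class of) `u` in `w`: words extending from one
occurrence of the abelian class of `u` to the next one. -/
def semiAbReturns {α : Type*} [DecidableEq α] (w : ℕ → α) (u : List α) : Set (List α) :=
  {r | ∃ i j, i ∈ abOcc w u ∧ j ∈ abOcc w u ∧ i < j ∧
      (∀ k, i < k → k < j → k ∉ abOcc w u) ∧ r = wordAt w i (j - i)}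

/-- Positions of (exact) occurrences of `u` in `w`. -/
def occW {α : Type*} [DecidableEq α] (w : ℕ → α) (u : List α) : Set ℕ :=
  {i | u = wordAt w i u.length}

/-- The ordinary return words of `u` in `w`. -/
def returnWords {α : Type*} [DecidableEq α] (w : ℕ → α) (u : List α) : Set (List α) :=
  {r | ∃ i j, i ∈ occW w u ∧ j ∈ occW w u ∧ i < j ∧
      (∀ k, i < k → k < j → k ∉ occW w u) ∧ r = wordAt w i (j - i)}

/-- `u` has exactly `k` semi-abelian returns in `w`. -/
def ExactlyKSemiAbReturns {α : Type*} [DecidableEq α] (w : ℕ → α) (u : List α) (k : ℕ) : Prop :=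
  ∃ f : Fin k → List α, Function.Injective f ∧ semiAbReturns w u = Set.range f

/-- `u` has exactly `k` abelian returns in `w`: there are `k` pairwise non-abelian-equivalent
representatives so that every semi-abelian return is abelian equivalent to exactly one of them,
and each representative is realized. -/
def ExactlyKAbReturns {α : Type*} [DecidableEq α] (w : ℕ → α) (u : List α) (k : ℕ) : Prop :=
  ∃ f : Fin k → List α,
    (∀ i j, AbEquiv (f i) (f j) → i = j) ∧
    (∀ r ∈ semiAbReturns w u, ∃ i, AbEquiv r (f i)) ∧
    (∀ i, ∃ r ∈ semiAbReturns w u, AbEquiv r (f i))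

/-- `u` has at most `k` abelian returns in `w`. -/
def AtMostKAbReturns {α : Type*} [DecidableEq α] (w : ℕ → α) (u : List α) (k : ℕ) : Prop :=
  ∃ f : Fin k → List α, ∀ r ∈ semiAbReturns w u, ∃ i, AbEquiv r (f i)

/-- `u` has at least `k` abelian returns in `w`. -/
def AtLeastKAbReturns {α : Type*} [DecidableEq α] (w : ℕ → α) (u : List α) (k : ℕ) : Prop :=
  ∃ f : Fin k → List α,
    (∀ i j, AbEquiv (f i) (f j) → i = j) ∧
    (∀ i, ∃ r ∈ semiAbReturns w u, AbEquiv r (f i))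

/-- `u` has at least two semi-abelian returns in `w`. -/
def AtLeastTwoSemiAbReturns {α : Type*} [DecidableEq α] (w : ℕ → α) (u : List α) : Prop :=
  ∃ r₁ r₂, r₁ ∈ semiAbReturns w u ∧ r₂ ∈ semiAbReturns w u ∧ r₁ ≠ r₂

/-- The factor complexity of `w`. -/
noncomputable def complexityW {α : Type*} (w : ℕ → α) (n : ℕ) : ℕ :=
  {u : List α | u.length = n ∧ IsFactorW w u}.ncard

/-- A Sturmian word: aperiodic binary word with factor complexity `n + 1`. -/
def SturmianW (w : ℕ → Bool) : Prop :=
  ¬ UltPeriodicW w ∧ ∀ n, complexityW w n = n + 1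

/-- Right special factor of a binary word. -/
def RightSpecial (w : ℕ → Bool) (B : List Bool) : Prop :=
  IsFactorW w (B ++ [false]) ∧ IsFactorW w (B ++ [true])

/-- Left special factor of a binary word. -/
def LeftSpecial (w : ℕ → Bool) (B : List Bool) : Prop :=
  IsFactorW w (false :: B) ∧ IsFactorW w (true :: B)

/-- Bispecial factor of a binary word. -/
def Bispecial (w : ℕ → Bool) (B : List Bool) : Prop :=
  RightSpecial w B ∧ LeftSpecial w B

/-- `w` is `c`-balanced. -/
def CBalanced {α : Type*} [DecidableEq α] (w : ℕ → α) (c : ℕ) : Prop :=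
  ∀ u v : List α, IsFactorW w u → IsFactorW w v → u.length = v.length →
    ∀ a : α, |((u.count a : ℤ) - (v.count a : ℤ))| ≤ (c : ℤ)

lemma wordAt_length {α : Type*} (w : ℕ → α) (i n : ℕ) : (wordAt w i n).length = n := by
  simp [wordAt]

lemma wordAt_one {α : Type*} (w : ℕ → α) (i : ℕ) : wordAt w i 1 = [w i] := by
  simp [wordAt, List.range_succ]

lemma wordAt_append {α : Type*} (w : ℕ → α) (i m n : ℕ) :
    wordAt w i (m + n) = wordAt w i m ++ wordAt w (i + m) n := by
  unfold wordAt
  rw [List.range_add, List.map_append, List.map_map]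
  congr 1
  exact List.map_congr_left fun k _ => by simp only [Function.comp]; congr 1; omega

lemma block_decomp (w : ℕ → Bool) (a : Bool) (k i : ℕ)
    (hi : [!a] ++ List.replicate k a ++ [!a]
        = wordAt w i (([!a] ++ List.replicate k a ++ [!a]).length)) :
    w i = !a ∧ List.replicate k a = wordAt w (i + 1) k ∧ w (i + 1 + k) = !a := by
  have hlen : ([!a] ++ List.replicate k a ++ [!a]).length = 1 + (k + 1) := by simp; omega
  rw [hlen, wordAt_append, wordAt_one, wordAt_append, wordAt_one] at hi
  simp only [List.cons_append, List.nil_append, List.append_assoc] at hi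
  rw [List.cons_eq_cons] at hi
  obtain ⟨h0, hrest⟩ := hi
  obtain ⟨hmid, hlast⟩ := List.append_inj hrest (by simp [wordAt_length])
  refine ⟨h0.symm, hmid, ?_⟩
  simpa using hlast.symm

lemma mem_abOcc_single (w : ℕ → Bool) (x : Bool) (m : ℕ) :
    m ∈ abOcc w [x] ↔ w m = x := by
  simp only [abOcc, Set.mem_setOf_eq, List.length_cons, List.length_nil, wordAt_one]
  constructor
  · intro hq
    simpa [wordAt_one, List.count_singleton'] using hq x
  · rintro rfl
    intro t; rfl


/-- In a recurrent binary word all of whose factors have at most three abelian returns,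
each letter appears in blocks of at most three distinct lengths. -/
theorem stmt19 (w : ℕ → Bool) (hrec : RecurrentW w)
    (h : ∀ u, IsFactorW w u → u ≠ [] → AtMostKAbReturns w u 3) :
    ∀ a : Bool, ∃ k₁ k₂ k₃ : ℕ, ∀ k, 0 < k →
      (∃ b c : Bool, b ≠ a ∧ c ≠ a ∧
        IsFactorW w ([b] ++ List.replicate k a ++ [c])) →
      k = k₁ ∨ k = k₂ ∨ k = k₃ := by
  intro a
  by_cases hfac : IsFactorW w [!a]
  · obtain ⟨f, hret⟩ := h [!a] hfac (by simp)
    refine ⟨(f 0).count a, (f 1).count a, (f 2).count a, ?_⟩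
    rintro k hk ⟨b, c, hb, hc, i, hi⟩
    have hb' : b = !a := by cases a <;> cases b <;> simp_all
    have hc' : c = !a := by cases a <;> cases c <;> simp_all
    subst hb' hc'
    obtain ⟨h0, hmid, hend⟩ := block_decomp w a k i hi
    have hr : wordAt w i (k + 1) ∈ semiAbReturns w [!a] := by
      refine ⟨i, i + k + 1, (mem_abOcc_single w (!a) i).mpr h0, ?_, by omega, ?_, ?_⟩
      · rw [mem_abOcc_single]
        have : i + k + 1 = i + 1 + k := by omega
        rw [this]; exact hend
      · intro m h1 h2 hmem
        have hma := (mem_abOcc_single w (!a) m).mp hmem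
        have ht : ∃ t, t < k ∧ m = i + 1 + t := ⟨m - (i + 1), by omega, by omega⟩
        obtain ⟨t, htk, rfl⟩ := ht
        have hwa : w (i + 1 + t) = a := by
          have hmem2 : w (i + 1 + t) ∈ List.replicate k a := by
            rw [hmid]
            simp only [wordAt, List.mem_map, List.mem_range]
            exact ⟨t, htk, rfl⟩
          exact List.eq_of_mem_replicate hmem2
        rw [hwa] at hma
        exact absurd hma (by cases a <;> simp)
      · congr 1; omega
    have hcount : (wordAt w i (k + 1)).count a = k := by
      rw [show k + 1 = 1 + k from by omega, wordAt_append, wordAt_one, ← hmid]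
      simp [h0, List.count_replicate]
    obtain ⟨idx, habe⟩ := hret _ hr
    have hfi : (f idx).count a = k := by rw [← habe a, hcount]
    fin_cases idx
    · exact Or.inl hfi.symm
    · exact Or.inr (Or.inl hfi.symm)
    · exact Or.inr (Or.inr hfi.symm)
  · refine ⟨0, 0, 0, ?_⟩
    rintro k hk ⟨b, c, hb, hc, i, hi⟩
    have hb' : b = !a := by cases a <;> cases b <;> simp_all
    have hc' : c = !a := by cases a <;> cases c <;> simp_all
    subst hb' hc'
    obtain ⟨h0, -, -⟩ := block_decomp w a k i hi
    exact absurd ⟨i, by rw [List.length_singleton, wordAt_one, h0]⟩ hfac
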